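/- Let D ≥ 1, let z = (z₁,…,z_D) be a random vector whose coordinates are independent standard normal random variables (i.e., z has the D-fold product of the standard Gaussian measure on ℝ as its law), let γ > 0, and let g ∈ ℝ^D. Define d(z) = sign(g + γz) componentwise. Then E[⟨d(z), g⟩] = Σ_{i=1}^{D} g_i·(2Φ(g_i/γ) − 1) = Σ_{i=1}^{D} |g_i|·(2Φ(|g_i|/γ) − 1) ≥ 0, and E[⟨d(z), g⟩] = 0 if and only if g = 0. -/

import Mathlib

open MeasureTheory ProbabilityTheory

/-- The cumulative distribution function of the standard normal distribution. -/
noncomputable def Phi (x : ℝ) : ℝ := ((gaussianReal 0 1) (Set.Iic x)).toReal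

open scoped ENNReal NNReal

lemma measurable_realSign : Measurable Real.sign := by
  have : Real.sign = fun r : ℝ => if r < 0 then (-1:ℝ) else if 0 < r then 1 else 0 := by
    funext r; rfl
  rw [this]
  exact Measurable.ite (measurableSet_lt measurable_id measurable_const)
    measurable_const (Measurable.ite (measurableSet_lt measurable_const measurable_id)
      measurable_const measurable_const)

lemma abs_realSign_le (r : ℝ) : |Real.sign r| ≤ 1 := by
  rcases Real.sign_apply_eq r with h | h | h <;> rw [h] <;> norm_num

lemma gauss_noAtom (x : ℝ) : (gaussianReal 0 1) {x} = 0 :=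
  gaussianReal_absolutelyContinuous 0 one_ne_zero (measure_singleton x)

lemma Phi_neg (x : ℝ) : Phi (-x) = 1 - Phi x := by
  have hmap : (gaussianReal 0 1).map (fun t => (-1 : ℝ) * t) = gaussianReal 0 1 := by
    rw [gaussianReal_map_const_mul (-1)]
    norm_num
  have h1 : (gaussianReal 0 1) (Set.Iic (-x)) = (gaussianReal 0 1) (Set.Ici x) := by
    conv_lhs => rw [← hmap]
    rw [Measure.map_apply (by fun_prop) measurableSet_Iic]
    congr 1
    ext t
    simp only [Set.mem_preimage, Set.mem_Iic, Set.mem_Ici]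
    constructor <;> intro h <;> linarith
  have h2 : (gaussianReal 0 1) (Set.Ici x) = (gaussianReal 0 1) (Set.Ioi x) := by
    have : Set.Ioi x = Set.Ici x \ {x} := by
      ext t
      simp only [Set.mem_Ioi, Set.mem_diff, Set.mem_Ici, Set.mem_singleton_iff]
      constructor
      · intro h; exact ⟨h.le, (ne_of_gt h)⟩
      · intro ⟨h1, h2⟩; exact lt_of_le_of_ne h1 (Ne.symm h2)
    rw [this, measure_diff_null (gauss_noAtom x)]
  have h3 : (gaussianReal 0 1) (Set.Ioi x) = 1 - (gaussianReal 0 1) (Set.Iic x) := by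
    rw [← Set.compl_Iic, prob_compl_eq_one_sub measurableSet_Iic]
  have hle : (gaussianReal 0 1) (Set.Iic x) ≤ 1 := prob_le_one
  unfold Phi
  rw [h1, h2, h3, ENNReal.toReal_sub_of_le hle ENNReal.one_ne_top, ENNReal.toReal_one]

lemma Phi_zero : Phi 0 = 1 / 2 := by
  have := Phi_neg 0
  rw [neg_zero] at this; linarith

lemma Phi_mono {x y : ℝ} (h : x ≤ y) : Phi x ≤ Phi y :=
  ENNReal.toReal_mono (measure_ne_top _ _) (measure_mono (Set.Iic_subset_Iic.2 h))

lemma Phi_half_lt {x : ℝ} (hx : 0 < x) : 1 / 2 < Phi x := by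
  rw [← Phi_zero]
  have hsub : Set.Iic x = Set.Iic 0 ∪ Set.Ioc 0 x := by
    rw [Set.Iic_union_Ioc_eq_Iic hx.le]
  have hdisj : Disjoint (Set.Iic (0:ℝ)) (Set.Ioc 0 x) := by
    rw [Set.disjoint_left]; intro t ht ht'; exact absurd ht'.1 (not_lt.2 ht)
  have hpos : (0:ℝ≥0∞) < (gaussianReal 0 1) (Set.Ioc 0 x) := by
    rw [pos_iff_ne_zero]
    intro h0
    have := gaussianReal_absolutelyContinuous' 0 one_ne_zero h0
    rw [Real.volume_Ioc] at this
    simp at this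
    linarith
  have : (gaussianReal 0 1) (Set.Iic x)
      = (gaussianReal 0 1) (Set.Iic 0) + (gaussianReal 0 1) (Set.Ioc 0 x) := by
    rw [hsub, measure_union hdisj measurableSet_Ioc]
  unfold Phi
  rw [this]
  have h1 : (gaussianReal 0 1) (Set.Iic 0) ≠ ⊤ := measure_ne_top _ _
  have h2 : (gaussianReal 0 1) (Set.Ioc 0 x) ≠ ⊤ := measure_ne_top _ _
  rw [ENNReal.toReal_add h1 h2]
  have := ENNReal.toReal_pos hpos.ne' h2
  linarith

section part2
variable {μ : Measure ℝ}

lemma integral_sign_gauss {γ : ℝ} (hγ : 0 < γ) (a : ℝ) :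
    ∫ t, Real.sign (a + γ * t) ∂(gaussianReal 0 1) = 2 * Phi (a / γ) - 1 := by
  set ν := gaussianReal 0 1
  set c : ℝ := -(a / γ) with hc
  have hae : (fun t => Real.sign (a + γ * t))
      =ᵐ[ν] (fun t => 1 - 2 * Set.indicator (Set.Iic c) (fun _ => (1:ℝ)) t) := by
    have hne : ∀ᵐ t ∂ν, t ≠ c := by
      rw [ae_iff]
      simpa using gauss_noAtom c
    filter_upwards [hne] with t ht
    rcases lt_or_gt_of_ne ht with h | h
    · have h1 : a + γ * t < 0 := by
        have : γ * t < γ * c := by exact mul_lt_mul_of_pos_left h hγ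
        rw [hc] at this
        have : γ * t < -a := by
          rw [mul_neg, mul_div_cancel₀ a (ne_of_gt hγ)] at this
          exact this
        linarith
      rw [Real.sign_of_neg h1, Set.indicator_of_mem (Set.mem_Iic.2 h.le)]
      norm_num
    · have h1 : 0 < a + γ * t := by
        have : γ * c < γ * t := mul_lt_mul_of_pos_left h hγ
        rw [hc, mul_neg, mul_div_cancel₀ a (ne_of_gt hγ)] at this
        linarith
      rw [Real.sign_of_pos h1, Set.indicator_of_notMem (by simpa using h)]
      norm_num
  rw [integral_congr_ae hae]
  have hind : Integrable (fun t => Set.indicator (Set.Iic c) (fun _ => (1:ℝ)) t) ν :=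
    (integrable_const (1:ℝ)).indicator measurableSet_Iic
  rw [integral_sub (integrable_const 1) (hind.const_mul 2)]
  rw [MeasureTheory.integral_const_mul, integral_indicator_const (1:ℝ) measurableSet_Iic]
  simp only [integral_const, measure_univ, ENNReal.toReal_one, smul_eq_mul, one_mul, one_smul, probReal_univ]
  have : ν.real (Set.Iic c) = Phi c := rfl
  rw [this, hc, Phi_neg]
  ring

lemma pi_map_eval (D : ℕ) (μ : Measure ℝ) [IsProbabilityMeasure μ] (i : Fin D) :
    (Measure.pi fun _ : Fin D => μ).map (fun z => z i) = μ := by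
  ext s hs
  rw [Measure.map_apply (measurable_pi_apply i) hs]
  have hpre : (fun z : Fin D → ℝ => z i) ⁻¹' s
      = Set.pi Set.univ (Function.update (fun _ => Set.univ) i s) := by
    exact Set.eval_preimage
  rw [hpre, Measure.pi_pi]
  rw [Finset.prod_eq_single i (fun j _ hj => by rw [Function.update_of_ne hj]; simp)
    (fun h => absurd (Finset.mem_univ i) h)]
  rw [Function.update_self]

end part2

lemma term_abs {γ : ℝ} (hγ : 0 < γ) (a : ℝ) :
    a * (2 * Phi (a / γ) - 1) = |a| * (2 * Phi (|a| / γ) - 1) := by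
  rcases le_or_gt 0 a with h | h
  · rw [abs_of_nonneg h]
  · rw [abs_of_neg h]
    have : (-a) / γ = -(a / γ) := by ring
    rw [this, Phi_neg]
    ring

lemma term_nonneg {γ : ℝ} (hγ : 0 < γ) (a : ℝ) : 0 ≤ a * (2 * Phi (a / γ) - 1) := by
  rw [term_abs hγ]
  have h1 : Phi 0 ≤ Phi (|a| / γ) := Phi_mono (div_nonneg (abs_nonneg a) hγ.le)
  rw [Phi_zero] at h1
  have := abs_nonneg a
  nlinarith

lemma term_eq_zero_iff {γ : ℝ} (hγ : 0 < γ) (a : ℝ) :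
    a * (2 * Phi (a / γ) - 1) = 0 ↔ a = 0 := by
  constructor
  · intro h
    by_contra ha
    rw [term_abs hγ] at h
    have h1 : 0 < |a| := abs_pos.2 ha
    have h2 : 1 / 2 < Phi (|a| / γ) := Phi_half_lt (div_pos h1 hγ)
    nlinarith
  · intro h; simp [h]

/-- Ascent-direction guarantee: for `z` with i.i.d. standard normal
coordinates, `γ > 0` and `g ∈ ℝ^D`, with `d(z) = sign(g + γz)` componentwise,
`E[⟨d(z), g⟩] = Σᵢ gᵢ (2Φ(gᵢ/γ) − 1) = Σᵢ |gᵢ| (2Φ(|gᵢ|/γ) − 1) ≥ 0`,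
with `E[⟨d(z), g⟩] = 0` iff `g = 0`. -/
theorem stmt4 (D : ℕ) (hD : 1 ≤ D) (γ : ℝ) (hγ : 0 < γ) (g : Fin D → ℝ) :
    (∫ z : Fin D → ℝ, (∑ i, Real.sign (g i + γ * z i) * g i)
        ∂(Measure.pi fun _ => gaussianReal 0 1)) =
      ∑ i, g i * (2 * Phi (g i / γ) - 1) ∧
    (∑ i, g i * (2 * Phi (g i / γ) - 1)) = ∑ i, |g i| * (2 * Phi (|g i| / γ) - 1) ∧
    0 ≤ ∑ i, g i * (2 * Phi (g i / γ) - 1) ∧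
    ((∫ z : Fin D → ℝ, (∑ i, Real.sign (g i + γ * z i) * g i)
        ∂(Measure.pi fun _ => gaussianReal 0 1)) = 0 ↔ g = 0) := by
  set P : Measure (Fin D → ℝ) := Measure.pi fun _ => gaussianReal 0 1 with hP
  have hmeas : ∀ i : Fin D, Measurable (fun z : Fin D → ℝ => Real.sign (g i + γ * z i)) :=
    fun i => measurable_realSign.comp
      (measurable_const.add (measurable_const.mul (measurable_pi_apply i)))
  have hint : ∀ i : Fin D, Integrable (fun z : Fin D → ℝ => Real.sign (g i + γ * z i)) P := by
    intro i
    refine (integrable_const (1:ℝ)).mono' (hmeas i).aestronglyMeasurable ?_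
    filter_upwards with z
    simpa using abs_realSign_le (g i + γ * z i)
  have hcoord : ∀ i : Fin D,
      (∫ z, Real.sign (g i + γ * z i) ∂P) = 2 * Phi (g i / γ) - 1 := by
    intro i
    have hm : Measurable (fun t : ℝ => Real.sign (g i + γ * t)) :=
      measurable_realSign.comp (measurable_const.add (measurable_const.mul measurable_id))
    have : (∫ z, Real.sign (g i + γ * z i) ∂P)
        = ∫ t, Real.sign (g i + γ * t) ∂(gaussianReal 0 1) := by
      rw [← pi_map_eval D (gaussianReal 0 1) i,
        integral_map (measurable_pi_apply i).aemeasurable hm.aestronglyMeasurable]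
    rw [this, integral_sign_gauss hγ]
  have hInt : (∫ z, (∑ i, Real.sign (g i + γ * z i) * g i) ∂P)
      = ∑ i, g i * (2 * Phi (g i / γ) - 1) := by
    rw [integral_finset_sum Finset.univ (fun i _ => (hint i).mul_const (g i))]
    refine Finset.sum_congr rfl fun i _ => ?_
    rw [MeasureTheory.integral_mul_const, hcoord i, mul_comm]
  refine ⟨hInt, Finset.sum_congr rfl fun i _ => term_abs hγ (g i),
    Finset.sum_nonneg fun i _ => term_nonneg hγ (g i), ?_⟩
  rw [hInt]
  constructor
  · intro h
    funext i
    have := (Finset.sum_eq_zero_iff_of_nonneg fun j _ => term_nonneg hγ (g j)).1 h i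
      (Finset.mem_univ i)
    exact (term_eq_zero_iff hγ (g i)).1 this
  · intro h
    subst h
    simp
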